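/- Under the DCA iteration y_{k+1} ∈ ∂h(x_k), x_{k+1} ∈ ∂g(x_{k+1})⁻¹(y_{k+1}) with g γ₁-convex, h γ₂-convex, γ₁ + γ₂ > 0, if f = g − h is bounded below and the sequence (x_k) is bounded, then every subsequential limit x̄ of (x_k) is a critical point of f, i.e., ∂g(x̄) ∩ ∂h(x̄) ≠ ∅. -/

import Mathlib

open Filter
open Metric
open scoped RealInnerProductSpace Topology

/-- The convex subdifferential. -/
def Subdiff {n : ℕ} (g : EuclideanSpace ℝ (Fin n) → ℝ) (x : EuclideanSpace ℝ (Fin n)) :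
    Set (EuclideanSpace ℝ (Fin n)) :=
  {v | ∀ z, g x + ⟪v, z - x⟫ ≤ g z}

/-- `h` is `γ`-convex if `h − (γ/2)‖·‖²` is convex. -/
def GammaConvex {n : ℕ} (h : EuclideanSpace ℝ (Fin n) → ℝ) (γ : ℝ) : Prop :=
  ConvexOn ℝ Set.univ (fun x => h x - γ / 2 * ‖x‖ ^ 2)

lemma strong_subgrad {n : ℕ} {h : EuclideanSpace ℝ (Fin n) → ℝ} {γ : ℝ}
    (hh' : GammaConvex h γ) {x v : EuclideanSpace ℝ (Fin n)} (hv : v ∈ Subdiff h x)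
    (z : EuclideanSpace ℝ (Fin n)) :
    h x + ⟪v, z - x⟫ + γ / 2 * ‖z - x‖ ^ 2 ≤ h z := by
  have key : ∀ t ∈ Set.Ioc (0:ℝ) 1,
      h x + ⟪v, z - x⟫ + γ / 2 * (1 - t) * ‖z - x‖ ^ 2 ≤ h z := by
    intro t ht
    have hconv := hh'.2 (Set.mem_univ x) (Set.mem_univ z)
      (by linarith [ht.2] : (0:ℝ) ≤ 1 - t) ht.1.le (by ring)
    have hcomb : (1 - t) • x + t • z = x + t • (z - x) := by
      module
    rw [hcomb] at hconv
    have hsub := hv (x + t • (z - x))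
    have hinner : ⟪v, (x + t • (z - x)) - x⟫ = t * ⟪v, z - x⟫ := by
      rw [add_sub_cancel_left, real_inner_smul_right]
    rw [hinner] at hsub
    have hnorm : ‖x + t • (z - x)‖ ^ 2
        = ‖x‖ ^ 2 + 2 * t * ⟪x, z - x⟫ + t ^ 2 * ‖z - x‖ ^ 2 := by
      rw [norm_add_sq_real, real_inner_smul_right, norm_smul]
      rw [mul_pow, Real.norm_eq_abs, sq_abs]
      ring
    simp only [smul_eq_mul] at hconv
    have e1 : ⟪x, z - x⟫ = ⟪x, z⟫ - ‖x‖ ^ 2 := by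
      rw [inner_sub_right, real_inner_self_eq_norm_sq]
    have e2 : ‖z - x‖ ^ 2 = ‖z‖ ^ 2 - 2 * ⟪x, z⟫ + ‖x‖ ^ 2 := by
      rw [norm_sub_sq_real, real_inner_comm]
    have ht0 := ht.1
    have hid : ‖x + t • (z - x)‖ ^ 2
        = (1 - t) * ‖x‖ ^ 2 + t * ‖z‖ ^ 2 + t * (t - 1) * ‖z - x‖ ^ 2 := by
      rw [hnorm, e1, e2]; ring
    rw [hid] at hconv
    nlinarith [hsub, hconv, ht0, sq_nonneg (‖z - x‖)]
  have hIoc : Set.Ioc (0:ℝ) 1 ∈ 𝓝[>] (0:ℝ) := Ioc_mem_nhdsGT_of_mem ⟨le_refl 0, zero_lt_one⟩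
  have hcont : Tendsto (fun t : ℝ => h x + ⟪v, z - x⟫ + γ / 2 * (1 - t) * ‖z - x‖ ^ 2)
      (𝓝[>] (0:ℝ)) (𝓝 (h x + ⟪v, z - x⟫ + γ / 2 * ‖z - x‖ ^ 2)) := by
    have : Continuous (fun t : ℝ => h x + ⟪v, z - x⟫ + γ / 2 * (1 - t) * ‖z - x‖ ^ 2) := by
      continuity
    have h2 := (this.tendsto 0).mono_left (nhdsWithin_le_nhds (s := Set.Ioi (0:ℝ)))
    simpa using h2
  exact le_of_tendsto hcont (Filter.eventually_of_mem hIoc key)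

/-- DCA convergence: with `g` `γ₁`-convex, `h` `γ₂`-convex, `γ₁ + γ₂ > 0`, if `f = g − h` is
bounded below and the DCA sequence `(x_k)` is bounded, then every subsequential limit of
`(x_k)` is a critical point of `f`, i.e. `∂g(xbar) ∩ ∂h(xbar) ≠ ∅`. -/
theorem dca_subsequential_limits_critical (n : ℕ) (g h : EuclideanSpace ℝ (Fin n) → ℝ)
    (γ₁ γ₂ : ℝ) (hγ₁ : 0 ≤ γ₁) (hγ₂ : 0 ≤ γ₂) (hγ : 0 < γ₁ + γ₂)
    (hg : ConvexOn ℝ Set.univ g) (hh : ConvexOn ℝ Set.univ h)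
    (hg' : GammaConvex g γ₁) (hh' : GammaConvex h γ₂)
    (hbdd : BddBelow (Set.range fun z => g z - h z))
    (x y : ℕ → EuclideanSpace ℝ (Fin n))
    (hy : ∀ k, y (k + 1) ∈ Subdiff h (x k))
    (hx : ∀ k, y (k + 1) ∈ Subdiff g (x (k + 1)))
    (hxb : Bornology.IsBounded (Set.range x)) :
    ∀ xbar : EuclideanSpace ℝ (Fin n),
      (∃ φ : ℕ → ℕ, StrictMono φ ∧ Tendsto (x ∘ φ) atTop (𝓝 xbar)) →
        (Subdiff g xbar ∩ Subdiff h xbar).Nonempty := by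
  intro xbar ⟨φ, hφ, hlim⟩
  set f : EuclideanSpace ℝ (Fin n) → ℝ := fun z => g z - h z with hf
  clear_value f
  -- continuity of g and h
  have hgc : Continuous g := by
    rw [← continuousOn_univ]; exact hg.continuousOn isOpen_univ
  have hhc : Continuous h := by
    rw [← continuousOn_univ]; exact hh.continuousOn isOpen_univ
  -- sufficient decrease
  have key : ∀ k, f (x (k + 1)) + (γ₁ + γ₂) / 2 * ‖x (k + 1) - x k‖ ^ 2 ≤ f (x k) := by
    intro k
    have h1 := strong_subgrad hg' (hx k) (x k)
    have h2 := strong_subgrad hh' (hy k) (x (k + 1))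
    have hir : ⟪y (k + 1), x k - x (k + 1)⟫ = -⟪y (k + 1), x (k + 1) - x k⟫ := by
      rw [← inner_neg_right, neg_sub]
    have hnr : ‖x k - x (k + 1)‖ = ‖x (k + 1) - x k‖ := norm_sub_rev _ _
    rw [hir, hnr] at h1
    simp only [hf]
    nlinarith [h1, h2]
  -- f ∘ x is antitone and bounded below, hence convergent
  have hanti : Antitone (fun k => f (x k)) := by
    apply antitone_nat_of_succ_le
    intro k
    show f (x (k + 1)) ≤ f (x k)
    nlinarith [key k, mul_nonneg hγ₁ (sq_nonneg ‖x (k + 1) - x k‖),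
      mul_nonneg hγ₂ (sq_nonneg ‖x (k + 1) - x k‖)]
  have hbdd' : BddBelow (Set.range fun k => f (x k)) := by
    obtain ⟨B, hB⟩ := hbdd
    exact ⟨B, by rintro _ ⟨k, rfl⟩; exact hB ⟨x k, rfl⟩⟩
  have hconv : Tendsto (fun k => f (x k)) atTop (𝓝 (⨅ k, f (x k))) :=
    tendsto_atTop_ciInf hanti hbdd'
  -- differences tend to zero
  have hdiff0 : Tendsto (fun k => f (x k) - f (x (k + 1))) atTop (𝓝 0) := by
    have h2 : Tendsto (fun k => f (x (k + 1))) atTop (𝓝 (⨅ k, f (x k))) :=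
      hconv.comp (tendsto_add_atTop_nat 1)
    simpa using hconv.sub h2
  have hdn : Tendsto (fun k => ‖x (k + 1) - x k‖ ^ 2) atTop (𝓝 0) := by
    have hb : ∀ k, ‖x (k + 1) - x k‖ ^ 2 ≤ 2 / (γ₁ + γ₂) * (f (x k) - f (x (k + 1))) := by
      intro k
      rw [div_mul_eq_mul_div, le_div_iff₀ hγ]
      have hk := key k
      nlinarith [hk]
    exact squeeze_zero (fun k => sq_nonneg _) hb
      (by simpa using hdiff0.const_mul (2 / (γ₁ + γ₂)))
  have hd : Tendsto (fun k => x (k + 1) - x k) atTop (𝓝 0) := by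
    rw [tendsto_zero_iff_norm_tendsto_zero]
    have := (hdn.sqrt)
    simp only [Real.sqrt_zero] at this
    convert this using 2 with k
    rw [Real.sqrt_sq (norm_nonneg _)]
  -- the shifted subsequence also converges to xbar
  have hlim1 : Tendsto (fun j => x (φ j + 1)) atTop (𝓝 xbar) := by
    have h1 : Tendsto (fun j => x (φ j + 1) - x (φ j)) atTop (𝓝 0) :=
      hd.comp hφ.tendsto_atTop
    have h2 : Tendsto (fun j => x (φ j) + (x (φ j + 1) - x (φ j))) atTop (𝓝 (xbar + 0)) :=
      hlim.add h1
    simpa using h2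
  -- boundedness of the subgradients
  obtain ⟨R, hR⟩ := hxb.subset_closedBall 0
  obtain ⟨C, hC⟩ := (isCompact_closedBall (0 : EuclideanSpace ℝ (Fin n))
    (|R| + 1)).exists_bound_of_continuousOn hhc.continuousOn
  have hxR : ∀ k, ‖x k‖ ≤ |R| := fun k => by
    have := hR ⟨k, rfl⟩
    simp only [Metric.mem_closedBall, dist_zero_right] at this
    exact this.trans (le_abs_self R)
  have hC0 : 0 ≤ C := le_trans (norm_nonneg _) (hC 0 (by simp [abs_nonneg]; positivity))
  have ybound : ∀ j, y (φ j + 1) ∈ Metric.closedBall (0 : EuclideanSpace ℝ (Fin n)) (2 * C) := by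
    intro j
    set k := φ j with hk
    rw [Metric.mem_closedBall, dist_zero_right]
    by_cases hy0 : y (k + 1) = 0
    · rw [hy0]; simpa using by linarith
    · have hyn : 0 < ‖y (k + 1)‖ := norm_pos_iff.2 hy0
      set u : EuclideanSpace ℝ (Fin n) := ‖y (k + 1)‖⁻¹ • y (k + 1) with hu
      have hun : ‖u‖ = 1 := by
        rw [hu, norm_smul, norm_inv, norm_norm, inv_mul_cancel₀ hyn.ne']
      have hsub := hy k (x k + u)
      have hinner : ⟪y (k + 1), (x k + u) - x k⟫ = ‖y (k + 1)‖ := by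
        rw [add_sub_cancel_left, hu, real_inner_smul_right, real_inner_self_eq_norm_sq]
        field_simp
      rw [hinner] at hsub
      have hm1 : x k ∈ Metric.closedBall (0 : EuclideanSpace ℝ (Fin n)) (|R| + 1) := by
        rw [Metric.mem_closedBall, dist_zero_right]; linarith [hxR k]
      have hm2 : x k + u ∈ Metric.closedBall (0 : EuclideanSpace ℝ (Fin n)) (|R| + 1) := by
        rw [Metric.mem_closedBall, dist_zero_right]
        calc ‖x k + u‖ ≤ ‖x k‖ + ‖u‖ := norm_add_le _ _
          _ ≤ |R| + 1 := by rw [hun]; linarith [hxR k]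
      have b1 := (hC _ hm1)
      have b2 := (hC _ hm2)
      rw [Real.norm_eq_abs] at b1 b2
      have := abs_le.1 b1
      have := abs_le.1 b2
      linarith [(abs_le.1 b1).1, (abs_le.1 b2).2]
  -- extract a convergent subsequence of the subgradients
  obtain ⟨ybar, -, ψ, hψ, hylim⟩ := tendsto_subseq_of_bounded
    (Metric.isBounded_closedBall) ybound
  refine ⟨ybar, ?_, ?_⟩
  · -- ybar ∈ Subdiff g xbar
    intro z
    have hx1 : Tendsto (fun j => x (φ (ψ j) + 1)) atTop (𝓝 xbar) :=
      hlim1.comp hψ.tendsto_atTop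
    have hT : Tendsto (fun j => g (x (φ (ψ j) + 1)) + ⟪y (φ (ψ j) + 1), z - x (φ (ψ j) + 1)⟫)
        atTop (𝓝 (g xbar + ⟪ybar, z - xbar⟫)) :=
      ((hgc.tendsto xbar).comp hx1).add (hylim.inner (tendsto_const_nhds.sub hx1))
    exact le_of_tendsto hT (Filter.Eventually.of_forall fun j => hx (φ (ψ j)) z)
  · -- ybar ∈ Subdiff h xbar
    intro z
    have hx0 : Tendsto (fun j => x (φ (ψ j))) atTop (𝓝 xbar) :=
      hlim.comp hψ.tendsto_atTop
    have hT : Tendsto (fun j => h (x (φ (ψ j))) + ⟪y (φ (ψ j) + 1), z - x (φ (ψ j))⟫)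
        atTop (𝓝 (h xbar + ⟪ybar, z - xbar⟫)) :=
      ((hhc.tendsto xbar).comp hx0).add (hylim.inner (tendsto_const_nhds.sub hx0))
    exact le_of_tendsto hT (Filter.Eventually.of_forall fun j => hy (φ (ψ j)) z)
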